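/- Let X₁, …, X_T be real-valued random variables (not necessarily independent) on a probability space such that for each t, |log(1 + X_t)| ≤ c almost surely and E[(log(1 + X_t))²] ≤ v². If v² ≤ min{1, (4T²·(e^{2Tc} - 2Tc - 1)/(4T²c²))^{-1}}, then E[(∏_{t=1}^T (1 + X_t) - 1)²] ≤ v²·(4 + 64T²·(e^{2Tc} - 2Tc - 1)/(4T²c²)). -/

import Mathlib

open MeasureTheory Real

set_option maxHeartbeats 1000000

lemma exp_taylor2 (x : ℝ) :
    Real.exp x - x - 1 = ∑' n : ℕ, x ^ (n + 2) / (Nat.factorial (n + 2) : ℝ) := by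
  have hs := Real.summable_pow_div_factorial x
  have h := Summable.sum_add_tsum_nat_add (f := fun n => x ^ n / (Nat.factorial n : ℝ)) 2 hs
  have hexp : Real.exp x = ∑' n : ℕ, x ^ n / (Nat.factorial n : ℝ) := by
    rw [Real.exp_eq_exp_ℝ, NormedSpace.exp_eq_tsum_div]
  rw [hexp, ← h]
  simp [Finset.sum_range_succ]
  ring

set_option maxHeartbeats 1000000 in
lemma key1 {a b : ℝ} (ha : 0 ≤ a) (hab : a ≤ b) :
    b ^ 2 * (Real.exp a - a - 1) ≤ a ^ 2 * (Real.exp b - b - 1) := by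
  have hb : 0 ≤ b := ha.trans hab
  have hsa : Summable (fun n : ℕ => a ^ (n + 2) / (Nat.factorial (n + 2) : ℝ)) :=
    (summable_nat_add_iff 2).mpr (Real.summable_pow_div_factorial a)
  have hsb : Summable (fun n : ℕ => b ^ (n + 2) / (Nat.factorial (n + 2) : ℝ)) :=
    (summable_nat_add_iff 2).mpr (Real.summable_pow_div_factorial b)
  rw [exp_taylor2, exp_taylor2, ← tsum_mul_left, ← tsum_mul_left]
  refine Summable.tsum_le_tsum (fun n => ?_) (hsa.mul_left _) (hsb.mul_left _)
  have hfac : (0:ℝ) < (Nat.factorial (n + 2) : ℝ) := by positivity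
  rw [mul_div_assoc', mul_div_assoc', div_le_div_iff₀ hfac hfac]
  have h1 : a ^ n ≤ b ^ n := pow_le_pow_left₀ ha hab n
  have h2 : b ^ 2 * a ^ (n + 2) ≤ a ^ 2 * b ^ (n + 2) := by
    calc b ^ 2 * a ^ (n + 2) = a ^ 2 * b ^ 2 * a ^ n := by ring
      _ ≤ a ^ 2 * b ^ 2 * b ^ n := by
          apply mul_le_mul_of_nonneg_left h1; positivity
      _ = a ^ 2 * b ^ (n + 2) := by ring
  exact mul_le_mul_of_nonneg_right h2 hfac.le

lemma key2 {y b : ℝ} (hb : 0 < b) (hy : |y| ≤ b) :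
    Real.exp y - y - 1 ≤ y ^ 2 * ((Real.exp b - b - 1) / b ^ 2) := by
  have h0 : Real.exp y - y - 1 ≤ Real.exp |y| - |y| - 1 := by
    rcases le_or_gt 0 y with h | h
    · rw [abs_of_nonneg h]
    · rw [abs_of_neg h]
      have hs : (-y) ≤ Real.sinh (-y) := Real.self_le_sinh_iff.mpr (by linarith)
      rw [Real.sinh_eq] at hs
      simp only [neg_neg] at hs
      linarith
  have h1 := key1 (abs_nonneg y) hy
  have hb2 : (0:ℝ) < b ^ 2 := by positivity
  have h2 : Real.exp |y| - |y| - 1 ≤ |y| ^ 2 * (Real.exp b - b - 1) / b ^ 2 :=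
    (le_div_iff₀ hb2).mpr (by nlinarith)
  calc Real.exp y - y - 1 ≤ Real.exp |y| - |y| - 1 := h0
    _ ≤ |y| ^ 2 * (Real.exp b - b - 1) / b ^ 2 := h2
    _ = y ^ 2 * ((Real.exp b - b - 1) / b ^ 2) := by rw [sq_abs]; ring


/-- Proposition 1 of the paper: mean-squared error of noisy products. -/
theorem noisy_product_error_bound
    {Ω : Type*} [MeasurableSpace Ω] (μ : Measure Ω) [IsProbabilityMeasure μ]
    (T : ℕ) (hT : 0 < T) (c v : ℝ) (hc : 0 < c) (hv : 0 < v)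
    (X : Fin T → Ω → ℝ)
    (hmeas : ∀ t, AEMeasurable (X t) μ)
    (hpos : ∀ t, ∀ᵐ ω ∂μ, 0 < 1 + X t ω)
    (hbd : ∀ t, ∀ᵐ ω ∂μ, |Real.log (1 + X t ω)| ≤ c)
    (hvar : ∀ t, ∫ ω, (Real.log (1 + X t ω)) ^ 2 ∂μ ≤ v ^ 2)
    (hsmall : v ^ 2 ≤ min 1
      ((4 * (T : ℝ) ^ 2 * ((Real.exp (2 * T * c) - 2 * T * c - 1) / (4 * T ^ 2 * c ^ 2)))⁻¹)) :
    ∫ ω, ((∏ t, (1 + X t ω)) - 1) ^ 2 ∂μ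
      ≤ v ^ 2 * (4 + 64 * (T : ℝ) ^ 2 *
        ((Real.exp (2 * T * c) - 2 * T * c - 1) / (4 * T ^ 2 * c ^ 2))) := by
  set g : ℝ := (Real.exp (2 * T * c) - 2 * T * c - 1) / (4 * T ^ 2 * c ^ 2) with hg_def
  have hT1 : (1:ℝ) ≤ (T:ℝ) := by exact_mod_cast hT
  have hTc : 0 < (T:ℝ) * c := by positivity
  have hg : 0 ≤ g := by
    apply div_nonneg _ (by positivity)
    nlinarith [Real.add_one_le_exp (2 * (T:ℝ) * c)]
  set Z : Fin T → Ω → ℝ := fun t ω => Real.log (1 + X t ω) with hZ_def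
  have hZmeas : ∀ t, AEMeasurable (Z t) μ := fun t =>
    Real.measurable_log.comp_aemeasurable (aemeasurable_const.add (hmeas t))
  have hSmeas : AEMeasurable (fun ω => ∑ t, Z t ω) μ :=
    Finset.aemeasurable_fun_sum _ fun t _ => hZmeas t
  have hPmeas : AEMeasurable (fun ω => ∏ t, (1 + X t ω)) μ :=
    Finset.aemeasurable_fun_prod _ fun t _ => aemeasurable_const.add (hmeas t)
  -- a.e. pointwise facts
  have hae : ∀ᵐ ω ∂μ, (∀ t, 0 < 1 + X t ω) ∧ (∀ t, |Z t ω| ≤ c) :=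
    (ae_all_iff.mpr hpos).and (ae_all_iff.mpr hbd)
  have hkey : ∀ᵐ ω ∂μ, ((∏ t, (1 + X t ω)) - 1) ^ 2 ≤ 4 * g * (∑ t, Z t ω) ^ 2 := by
    filter_upwards [hae] with ω hω
    set S : ℝ := ∑ t, Z t ω with hS_def
    have hprod : ∏ t, (1 + X t ω) = Real.exp S := by
      rw [hS_def, Real.exp_sum]
      exact Finset.prod_congr rfl fun t _ => (Real.exp_log (hω.1 t)).symm
    have hSbd : |S| ≤ T * c := by
      calc |S| ≤ ∑ t, |Z t ω| := Finset.abs_sum_le_sum_abs _ _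
        _ ≤ ∑ _t : Fin T, c := Finset.sum_le_sum fun t _ => hω.2 t
        _ = T * c := by simp [mul_comm]
    have h2S : |2 * S| ≤ 2 * T * c := by
      rw [abs_mul, abs_two]; linarith
    have hexp1 : (Real.exp S - 1) ^ 2 ≤ Real.exp (2 * S) - 2 * S - 1 := by
      have h1 := Real.add_one_le_exp S
      have h2 : Real.exp (2 * S) = Real.exp S * Real.exp S := by
        rw [← Real.exp_add]; ring_nf
      nlinarith [Real.exp_pos S]
    have hexp2 : Real.exp (2 * S) - 2 * S - 1 ≤ (2 * S) ^ 2 *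
        ((Real.exp (2 * T * c) - 2 * T * c - 1) / (2 * T * c) ^ 2) :=
      key2 (by positivity) h2S
    have heq : ((2 * (T:ℝ) * c) ^ 2) = 4 * T ^ 2 * c ^ 2 := by ring
    rw [hprod]
    calc (Real.exp S - 1) ^ 2 ≤ Real.exp (2 * S) - 2 * S - 1 := hexp1
      _ ≤ (2 * S) ^ 2 * ((Real.exp (2 * T * c) - 2 * T * c - 1) / (2 * T * c) ^ 2) := hexp2
      _ = 4 * g * S ^ 2 := by rw [hg_def, ← heq]; ring
  -- integrability
  have hZsq_int : ∀ t, Integrable (fun ω => Z t ω ^ 2) μ := by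
    intro t
    refine Integrable.mono' (integrable_const (c ^ 2))
      (((hZmeas t).pow_const 2).aestronglyMeasurable) ?_
    filter_upwards [hbd t] with ω hω
    rw [Real.norm_eq_abs, abs_pow, ← sq_abs c]
    exact pow_le_pow_left₀ (abs_nonneg _) (by rw [abs_of_pos hc]; exact hω) 2
  have hSsq_int : Integrable (fun ω => (∑ t, Z t ω) ^ 2) μ := by
    refine Integrable.mono' (integrable_const (((T:ℝ) * c) ^ 2))
      ((hSmeas.pow_const 2).aestronglyMeasurable) ?_
    filter_upwards [hae] with ω hω
    rw [Real.norm_eq_abs, abs_pow, ← sq_abs ((T:ℝ) * c)]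
    refine pow_le_pow_left₀ (abs_nonneg _) ?_ 2
    rw [abs_of_pos hTc]
    calc |∑ t, Z t ω| ≤ ∑ t, |Z t ω| := Finset.abs_sum_le_sum_abs _ _
      _ ≤ ∑ _t : Fin T, c := Finset.sum_le_sum fun t _ => hω.2 t
      _ = T * c := by simp [mul_comm]
  have hLHS_int : Integrable (fun ω => ((∏ t, (1 + X t ω)) - 1) ^ 2) μ := by
    refine Integrable.mono' (integrable_const (4 * g * ((T:ℝ) * c) ^ 2))
      ((((hPmeas.sub aemeasurable_const)).pow_const 2).aestronglyMeasurable) ?_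
    filter_upwards [hkey, hae] with ω h1 h2
    rw [Real.norm_eq_abs, abs_of_nonneg (by positivity)]
    refine h1.trans ?_
    have : (∑ t, Z t ω) ^ 2 ≤ ((T:ℝ) * c) ^ 2 := by
      rw [← sq_abs (∑ t, Z t ω)]
      refine pow_le_pow_left₀ (abs_nonneg _) ?_ 2
      calc |∑ t, Z t ω| ≤ ∑ t, |Z t ω| := Finset.abs_sum_le_sum_abs _ _
        _ ≤ ∑ _t : Fin T, c := Finset.sum_le_sum fun t _ => h2.2 t
        _ = T * c := by simp [mul_comm]
    nlinarith [hg]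
  -- chaining the integrals
  have step1 : ∫ ω, ((∏ t, (1 + X t ω)) - 1) ^ 2 ∂μ
      ≤ ∫ ω, 4 * g * (∑ t, Z t ω) ^ 2 ∂μ :=
    integral_mono_ae hLHS_int (hSsq_int.const_mul _) hkey
  have step2 : ∫ ω, (∑ t, Z t ω) ^ 2 ∂μ ≤ (T:ℝ) ^ 2 * v ^ 2 := by
    have hpt : ∀ ω, (∑ t, Z t ω) ^ 2 ≤ (T:ℝ) * ∑ t, Z t ω ^ 2 := by
      intro ω
      have := sq_sum_le_card_mul_sum_sq (s := (Finset.univ : Finset (Fin T)))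
        (f := fun t => Z t ω)
      simpa using this
    have hint : Integrable (fun ω => (T:ℝ) * ∑ t, Z t ω ^ 2) μ :=
      (integrable_finset_sum _ fun t _ => hZsq_int t).const_mul _
    calc ∫ ω, (∑ t, Z t ω) ^ 2 ∂μ ≤ ∫ ω, (T:ℝ) * ∑ t, Z t ω ^ 2 ∂μ :=
          integral_mono_ae hSsq_int hint (Filter.Eventually.of_forall hpt)
      _ = (T:ℝ) * ∑ t, ∫ ω, Z t ω ^ 2 ∂μ := by
          rw [integral_const_mul, integral_finset_sum _ fun t _ => hZsq_int t]
      _ ≤ (T:ℝ) * ∑ _t : Fin T, v ^ 2 := by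
          apply mul_le_mul_of_nonneg_left (Finset.sum_le_sum fun t _ => hvar t) (by positivity)
      _ = (T:ℝ) ^ 2 * v ^ 2 := by simp; ring
  calc ∫ ω, ((∏ t, (1 + X t ω)) - 1) ^ 2 ∂μ
      ≤ ∫ ω, 4 * g * (∑ t, Z t ω) ^ 2 ∂μ := step1
    _ = 4 * g * ∫ ω, (∑ t, Z t ω) ^ 2 ∂μ := integral_const_mul _ _
    _ ≤ 4 * g * ((T:ℝ) ^ 2 * v ^ 2) := by
        apply mul_le_mul_of_nonneg_left step2 (by positivity)
    _ ≤ v ^ 2 * (4 + 64 * (T:ℝ) ^ 2 * g) := by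
        nlinarith [sq_nonneg v, hg, mul_nonneg (mul_nonneg hg (sq_nonneg (T:ℝ))) (sq_nonneg v)]
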